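/- For a non-degenerate semigroup A with multiplication m in Q, the pair i = (m, m) is a multiplicative M-morphism A ⇸ A, it is dense, and it serves as an identity: for any dense multiplicative M-morphism f : A ⇸ B one has f∙i = f, and for any M-morphism f : A ⇸ B one has i_B∙f = f when the identity i_B on B is dense. -/

import Mathlib

open CategoryTheory Category MonoidalCategory Limits

universe v u

variable {C : Type u} [Category.{v} C] [MonoidalCategory C]

/-- A semigroup multiplication is non-degenerate. -/
def NonDeg (A : C) (m : A ⊗ A ⟶ A) : Prop :=
  (∀ X Y : C, Function.Injective (fun f : X ⟶ Y ⊗ A =>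
      (f ▷ A) ≫ (α_ Y A A).hom ≫ (Y ◁ m))) ∧
  (∀ X Y : C, Function.Injective (fun g : X ⟶ A ⊗ Y =>
      (A ◁ g) ≫ (α_ A A Y).inv ≫ (m ▷ Y)))

/-- Associativity of a semigroup multiplication. -/
def SgAssoc (A : C) (m : A ⊗ A ⟶ A) : Prop :=
  (m ▷ A) ≫ m = (α_ A A A).hom ≫ (A ◁ m) ≫ m

/-- A pair (f₁, f₂) is an `𝕄`-morphism `A ⇸ B`: eq. (2). -/
def IsMMor {A B : C} (mB : B ⊗ B ⟶ B) (f₁ : A ⊗ B ⟶ B) (f₂ : B ⊗ A ⟶ B) : Prop :=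
  (f₂ ▷ B) ≫ mB = (α_ B A B).hom ≫ (B ◁ f₁) ≫ mB

/-- The first component of an `𝕄`-morphism is multiplicative. -/
def Mult₁ {A B : C} (mA : A ⊗ A ⟶ A) (f₁ : A ⊗ B ⟶ B) : Prop :=
  (mA ▷ B) ≫ f₁ = (α_ A A B).hom ≫ (A ◁ f₁) ≫ f₁

/-- The second component of an `𝕄`-morphism is multiplicative. -/
def Mult₂ {A B : C} (mA : A ⊗ A ⟶ A) (f₂ : B ⊗ A ⟶ B) : Prop :=
  (α_ B A A).hom ≫ (B ◁ mA) ≫ f₂ = (f₂ ▷ A) ≫ f₂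

/-- The standing assumptions on the class `Q` of regular epimorphisms. -/
structure QData (C : Type u) [Category.{v} C] [MonoidalCategory C] where
  Q : MorphismProperty C
  regEpi : ∀ ⦃X Y : C⦄ (f : X ⟶ Y), Q f → Nonempty (RegularEpi f)
  comp_mem : ∀ ⦃X Y Z : C⦄ (f : X ⟶ Y) (g : Y ⟶ Z), Q f → Q g → Q (f ≫ g)
  tensor_mem : ∀ ⦃X Y X' Y' : C⦄ (f : X ⟶ Y) (g : X' ⟶ Y'), Q f → Q g → Q (f ⊗ₘ g)
  iso_mem : ∀ ⦃X Y : C⦄ (f : X ⟶ Y), IsIso f → Q f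
  cancel : ∀ ⦃X Y Z : C⦄ (s : X ⟶ Y) (t : Y ⟶ Z), Q s → Q (s ≫ t) → Q t
  coeq : ∀ ⦃X Y : C⦄ (f : X ⟶ Y), Q f →
    ∃ (Z : C) (u v : Z ⟶ X) (h : u ≫ f = v ≫ f),
      Nonempty (IsColimit (Cofork.ofπ f h)) ∧
      (∀ W : C, Nonempty (IsColimit (Cofork.ofπ (f := W ◁ u) (g := W ◁ v) (W ◁ f)
        (by rw [← MonoidalCategory.whiskerLeft_comp, ← MonoidalCategory.whiskerLeft_comp, h])))) ∧
      (∀ W : C, Nonempty (IsColimit (Cofork.ofπ (f := u ▷ W) (g := v ▷ W) (f ▷ W)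
        (by rw [← MonoidalCategory.comp_whiskerRight, ← MonoidalCategory.comp_whiskerRight, h]))))

lemma cancelR {B : C} (mB : B ⊗ B ⟶ B) (hnd : NonDeg B mB) {X : C} {p q : X ⟶ B}
    (h : (p ▷ B) ≫ mB = (q ▷ B) ≫ mB) : p = q := by
  have := hnd.1 X (𝟙_ C) (a₁ := p ≫ (λ_ B).inv) (a₂ := q ≫ (λ_ B).inv) ?_
  · simpa using congrArg (fun t => t ≫ (λ_ B).hom) this
  · simp only [comp_whiskerRight, assoc]
    have key : ((λ_ B).inv ▷ B) ≫ (α_ (𝟙_ C) B B).hom ≫ ((𝟙_ C) ◁ mB) = mB ≫ (λ_ B).inv := by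
      simp
    rw [key, reassoc_of% h]

lemma cancelL {B : C} (mB : B ⊗ B ⟶ B) (hnd : NonDeg B mB) {X : C} {p q : X ⟶ B}
    (h : (B ◁ p) ≫ mB = (B ◁ q) ≫ mB) : p = q := by
  have := hnd.2 X (𝟙_ C) (a₁ := p ≫ (ρ_ B).inv) (a₂ := q ≫ (ρ_ B).inv) ?_
  · simpa using congrArg (fun t => t ≫ (ρ_ B).hom) this
  · simp only [MonoidalCategory.whiskerLeft_comp, assoc]
    have key : (B ◁ (ρ_ B).inv) ≫ (α_ B B (𝟙_ C)).inv ≫ (mB ▷ (𝟙_ C)) = mB ≫ (ρ_ B).inv := by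
      simp
    rw [key, reassoc_of% h]

lemma eq1 {A B : C} (mB : B ⊗ B ⟶ B)
    (hB : (mB ▷ B) ≫ mB = (α_ B B B).hom ≫ (B ◁ mB) ≫ mB)
    (hndB : NonDeg B mB) (f₁ : A ⊗ B ⟶ B) (f₂ : B ⊗ A ⟶ B)
    (hf : (f₂ ▷ B) ≫ mB = (α_ B A B).hom ≫ (B ◁ f₁) ≫ mB) :
    (α_ A B B).hom ≫ (A ◁ mB) ≫ f₁ = (f₁ ▷ B) ≫ mB := by
  have hf' : (B ◁ f₁) ≫ mB = (α_ B A B).inv ≫ (f₂ ▷ B) ≫ mB := by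
    rw [hf]; simp
  have hB' : (B ◁ mB) ≫ mB = (α_ B B B).inv ≫ (mB ▷ B) ≫ mB := by
    rw [hB]; simp
  apply cancelL mB hndB
  have st : (B ◁ (α_ A B B).hom) ≫ (α_ B A (B ⊗ B)).inv ≫ (α_ (B ⊗ A) B B).inv
      ≫ ((α_ B A B).hom ▷ B) = (α_ B (A ⊗ B) B).inv := by
    monoidal
  calc B ◁ ((α_ A B B).hom ≫ (A ◁ mB) ≫ f₁) ≫ mB
      = (B ◁ (α_ A B B).hom) ≫ (B ◁ (A ◁ mB)) ≫ (B ◁ f₁) ≫ mB := by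
        simp only [MonoidalCategory.whiskerLeft_comp, assoc]
    _ = (B ◁ (α_ A B B).hom) ≫ (B ◁ (A ◁ mB)) ≫ (α_ B A B).inv ≫ (f₂ ▷ B) ≫ mB := by
        rw [hf']
    _ = (B ◁ (α_ A B B).hom) ≫ (α_ B A (B ⊗ B)).inv ≫ ((B ⊗ A) ◁ mB) ≫ (f₂ ▷ B) ≫ mB := by
        rw [associator_inv_naturality_right_assoc]
    _ = (B ◁ (α_ A B B).hom) ≫ (α_ B A (B ⊗ B)).inv ≫ (f₂ ▷ (B ⊗ B)) ≫ (B ◁ mB) ≫ mB := by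
        rw [whisker_exchange_assoc]
    _ = (B ◁ (α_ A B B).hom) ≫ (α_ B A (B ⊗ B)).inv ≫ (f₂ ▷ (B ⊗ B)) ≫ (α_ B B B).inv
        ≫ (mB ▷ B) ≫ mB := by rw [hB']
    _ = (B ◁ (α_ A B B).hom) ≫ (α_ B A (B ⊗ B)).inv ≫ (α_ (B ⊗ A) B B).inv
        ≫ ((f₂ ▷ B) ▷ B) ≫ (mB ▷ B) ≫ mB := by
        rw [associator_inv_naturality_left_assoc]
    _ = (B ◁ (α_ A B B).hom) ≫ (α_ B A (B ⊗ B)).inv ≫ (α_ (B ⊗ A) B B).inv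
        ≫ ((α_ B A B).hom ▷ B) ≫ ((B ◁ f₁) ▷ B) ≫ (mB ▷ B) ≫ mB := by
        rw [← comp_whiskerRight_assoc, hf]
        simp only [comp_whiskerRight, assoc]
    _ = (α_ B (A ⊗ B) B).inv ≫ ((B ◁ f₁) ▷ B) ≫ (mB ▷ B) ≫ mB := by
        rw [reassoc_of% st]
    _ = B ◁ ((f₁ ▷ B) ≫ mB) ≫ mB := by
        simp only [MonoidalCategory.whiskerLeft_comp, assoc]
        rw [hB', associator_inv_naturality_middle_assoc]

lemma eq2 {A B : C} (mB : B ⊗ B ⟶ B)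
    (hB : (mB ▷ B) ≫ mB = (α_ B B B).hom ≫ (B ◁ mB) ≫ mB)
    (hndB : NonDeg B mB) (f₁ : A ⊗ B ⟶ B) (f₂ : B ⊗ A ⟶ B)
    (hf : (f₂ ▷ B) ≫ mB = (α_ B A B).hom ≫ (B ◁ f₁) ≫ mB) :
    (mB ▷ A) ≫ f₂ = (α_ B B A).hom ≫ (B ◁ f₂) ≫ mB := by
  have hf' : (B ◁ f₁) ≫ mB = (α_ B A B).inv ≫ (f₂ ▷ B) ≫ mB := by
    rw [hf]; simp
  apply cancelR mB hndB
  have st : (α_ (B ⊗ B) A B).hom ≫ (α_ B B (A ⊗ B)).hom ≫ (B ◁ (α_ B A B).inv)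
      = ((α_ B B A).hom ▷ B) ≫ (α_ B (B ⊗ A) B).hom := by
    monoidal
  calc ((mB ▷ A) ≫ f₂) ▷ B ≫ mB
      = ((mB ▷ A) ▷ B) ≫ (f₂ ▷ B) ≫ mB := by
        simp only [comp_whiskerRight, assoc]
    _ = ((mB ▷ A) ▷ B) ≫ (α_ B A B).hom ≫ (B ◁ f₁) ≫ mB := by rw [hf]
    _ = (α_ (B ⊗ B) A B).hom ≫ (mB ▷ (A ⊗ B)) ≫ (B ◁ f₁) ≫ mB := by
        rw [associator_naturality_left_assoc]
    _ = (α_ (B ⊗ B) A B).hom ≫ ((B ⊗ B) ◁ f₁) ≫ (mB ▷ B) ≫ mB := by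
        rw [← whisker_exchange_assoc]
    _ = (α_ (B ⊗ B) A B).hom ≫ ((B ⊗ B) ◁ f₁) ≫ (α_ B B B).hom ≫ (B ◁ mB) ≫ mB := by
        rw [hB]
    _ = (α_ (B ⊗ B) A B).hom ≫ (α_ B B (A ⊗ B)).hom ≫ (B ◁ (B ◁ f₁)) ≫ (B ◁ mB) ≫ mB := by
        rw [associator_naturality_right_assoc]
    _ = (α_ (B ⊗ B) A B).hom ≫ (α_ B B (A ⊗ B)).hom ≫ (B ◁ (α_ B A B).inv)
        ≫ (B ◁ (f₂ ▷ B)) ≫ (B ◁ mB) ≫ mB := by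
        rw [← MonoidalCategory.whiskerLeft_comp_assoc, hf']
        simp only [MonoidalCategory.whiskerLeft_comp, assoc]
    _ = ((α_ B B A).hom ▷ B) ≫ (α_ B (B ⊗ A) B).hom ≫ (B ◁ (f₂ ▷ B)) ≫ (B ◁ mB) ≫ mB := by
        rw [reassoc_of% st]
    _ = ((α_ B B A).hom ≫ (B ◁ f₂) ≫ mB) ▷ B ≫ mB := by
        simp only [comp_whiskerRight, assoc]
        rw [hB, associator_naturality_middle_assoc]

/-- Proposition 3.4 together with the preceding discussion: the pair `i = (m, m)` is a
multiplicative `𝕄`-morphism `A ⇸ A`, which is dense when `m ∈ Q`, and it acts as an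
identity for the composition `∙`: `f ∙ i = f` for `f` dense and multiplicative, and
`i_B ∙ f = f` for any `𝕄`-morphism `f` (when `i_B` is dense). -/
theorem identity_mmor (QD : QData C) {A B : C} (mA : A ⊗ A ⟶ A) (mB : B ⊗ B ⟶ B)
    (hA : SgAssoc A mA) (hB : SgAssoc B mB)
    (hndA : NonDeg A mA) (hndB : NonDeg B mB)
    (hQA : QD.Q mA) (hQB : QD.Q mB)
    (f₁ : A ⊗ B ⟶ B) (f₂ : B ⊗ A ⟶ B) (hf : IsMMor mB f₁ f₂) :
    (IsMMor mA mA mA ∧ Mult₁ mA mA ∧ Mult₂ mA mA ∧ QD.Q mA) ∧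
    -- `f ∙ i = f`: the components of `f` satisfy the defining equations of `f ∙ i`
    (QD.Q f₁ → QD.Q f₂ → Mult₁ mA f₁ → Mult₂ mA f₂ →
      ((α_ A A B).hom ≫ (A ◁ f₁) ≫ f₁ = (mA ▷ B) ≫ f₁) ∧
      ((f₂ ▷ A) ≫ f₂ = (α_ B A A).hom ≫ (B ◁ mA) ≫ f₂)) ∧
    -- `i_B ∙ f = f`: the components of `f` satisfy the defining equations of `i_B ∙ f`
    (((α_ A B B).hom ≫ (A ◁ mB) ≫ f₁ = (f₁ ▷ B) ≫ mB) ∧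
     ((mB ▷ A) ≫ f₂ = (α_ B B A).hom ≫ (B ◁ f₂) ≫ mB)) := by
  exact ⟨⟨hA, hA, hA.symm, hQA⟩, fun _ _ h1 h2 => ⟨h1.symm, h2.symm⟩,
    eq1 mB hB hndB f₁ f₂ hf, eq2 mB hB hndB f₁ f₂ hf⟩
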